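/- Let $p_t(\alpha,\beta)$ be as in the recurrence $p_0=1$, $p_1=\alpha/4$, $p_2 = (\alpha/2-\beta)^2$, $p_t = (\alpha-\beta)p_{t-1} - \beta(\alpha-\beta)p_{t-2} + \beta^3 p_{t-3}$. If $0 \leq 4\beta < \alpha$, then for all $t \geq 1$: $p_t(\alpha,\beta) > \beta^t = p_t(4\beta,\beta) \geq 0$. -/
import Mathlib


theorem stmt_8 (α β : ℝ) (hβ : 0 ≤ β) (hαβ : 4 * β < α)
    (p : ℕ → ℝ)
    (hp0 : p 0 = 1) (hp1 : p 1 = α / 4) (hp2 : p 2 = (α / 2 - β) ^ 2)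
    (hprec : ∀ t, p (t + 3) =
      (α - β) * p (t + 2) - β * (α - β) * p (t + 1) + β ^ 3 * p t)
    (p' : ℕ → ℝ)
    (hp'0 : p' 0 = 1) (hp'1 : p' 1 = 4 * β / 4) (hp'2 : p' 2 = (4 * β / 2 - β) ^ 2)
    (hp'rec : ∀ t, p' (t + 3) =
      (4 * β - β) * p' (t + 2) - β * (4 * β - β) * p' (t + 1) + β ^ 3 * p' t) :
    ∀ t, 1 ≤ t → p' t = β ^ t ∧ β ^ t < p t ∧ (0 : ℝ) ≤ β ^ t := by
  have hα : 0 < α := lt_of_le_of_lt (by linarith) hαβ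
  have hp' : ∀ t, p' t = β ^ t := by
    have key : ∀ t, p' t = β ^ t ∧ p' (t+1) = β ^ (t+1) ∧ p' (t+2) = β ^ (t+2) := by
      intro t
      induction t with
      | zero => exact ⟨by simp [hp'0], by rw [hp'1]; ring, by rw [hp'2]; ring⟩
      | succ n ih =>
        obtain ⟨h0, h1, h2⟩ := ih
        refine ⟨h1, h2, ?_⟩
        have := hp'rec n
        rw [h0, h1, h2] at this
        rw [show n + 1 + 2 = n + 3 from rfl, this]; ring
    exact fun t => (key t).1
  set q : ℕ → ℝ := fun t => p (t+1) - β * p t with hq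
  have hqrec : ∀ t, q (t+2) = (α - 2*β) * q (t+1) - β^2 * q t := by
    intro t
    simp only [hq]
    have := hprec t
    rw [show t + 2 + 1 = t + 3 from rfl, this]
    ring
  have hq0 : q 0 = α/4 - β := by simp [hq, hp0, hp1]
  have hq1 : q 1 = (α/2 - β)^2 - β * (α/4) := by simp [hq, hp1, hp2]
  have hqpos : ∀ t, 0 < q t ∧ 0 < q (t+1) ∧ β * q t ≤ q (t+1) := by
    intro t
    induction t with
    | zero =>
      refine ⟨by rw [hq0]; linarith, ?_, ?_⟩
      · rw [hq1]; nlinarith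
      · rw [hq0, hq1]; nlinarith
    | succ n ih =>
      obtain ⟨h0, h1, h2⟩ := ih
      have h3 : (α - 3*β) * q (n+1) ≤ q (n+1+1) := by
        rw [show n + 1 + 1 = n + 2 from rfl, hqrec n]; nlinarith
      refine ⟨h1, by nlinarith, by nlinarith⟩
  have hpgt : ∀ t, β ^ (t+1) < p (t+1) := by
    intro t
    induction t with
    | zero => rw [hp1, pow_one]; linarith
    | succ n ih =>
      have hq' : 0 < q (n+1) := (hqpos (n+1)).1
      have hb : β * β^(n+1) ≤ β * p (n+1) := mul_le_mul_of_nonneg_left ih.le hβ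
      have hqdef : q (n+1) = p (n+2) - β * p (n+1) := rfl
      have : β ^ (n+1+1) = β * β ^ (n+1) := by ring
      rw [this]
      linarith
  intro t ht
  obtain ⟨s, rfl⟩ := Nat.exists_eq_add_of_le ht
  exact ⟨hp' _, by simpa [add_comm] using hpgt s, pow_nonneg hβ _⟩
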